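/- Asymptotics of the confluent hypergeometric function with argument growing proportionally to the second parameter, subcritical case: fix real numbers a > 0, b, and β̃ < 1. For natural numbers n with b + n > a, define ₁F₁(a;b+n;β̃n) := (Γ(b+n)/(Γ(a)Γ(b+n-a))) ∫₀¹ e^{β̃ n u} u^{a-1}(1-u)^{b+n-a-1} du. Then lim_{n→∞} ₁F₁(a;b+n;β̃n) = (1-β̃)^{-a}. -/

import Mathlib

open Real Filter Topology

open MeasureTheory Set

lemma my_integrable_bound {a δ : ℝ} (ha : 0 < a) (hδ : 0 < δ) :
    IntegrableOn (fun t : ℝ => t ^ (a - 1) * Real.exp (-(δ * t))) (Ioi 0) := by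
  have h0 : IntegrableOn (fun x : ℝ => Real.exp (-x) * x ^ (a - 1)) (Ioi 0) :=
    Real.GammaIntegral_convergent ha
  have h1 : IntegrableOn (fun x : ℝ => Real.exp (-(δ * x)) * (δ * x) ^ (a - 1)) (Ioi 0) := by
    have h2 := (integrableOn_Ioi_comp_mul_left_iff
      (fun x : ℝ => Real.exp (-x) * x ^ (a - 1)) 0 hδ).mpr
    rw [mul_zero] at h2
    exact h2 h0
  have h3 : IntegrableOn
      (fun x : ℝ => δ ^ (a - 1) * (x ^ (a - 1) * Real.exp (-(δ * x)))) (Ioi 0) := by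
    apply h1.congr_fun ?_ measurableSet_Ioi
    intro x hx
    dsimp only
    rw [Real.mul_rpow hδ.le (le_of_lt hx)]
    ring
  have hne : δ ^ (a - 1) ≠ 0 := (Real.rpow_pos_of_pos hδ _).ne'
  have h4 := h3.const_mul ((δ ^ (a - 1))⁻¹)
  simpa [IntegrableOn, inv_mul_cancel_left₀ hne] using h4

lemma my_real_beta {p q : ℝ} (hp : 0 < p) (hq : 0 < q) :
    ∫ u in (0:ℝ)..1, u ^ (p - 1) * (1 - u) ^ (q - 1)
      = Real.Gamma p * Real.Gamma q / Real.Gamma (p + q) := by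
  have key := Complex.Gamma_mul_Gamma_eq_betaIntegral
    (s := (p : ℂ)) (t := (q : ℂ)) (by simpa using hp) (by simpa using hq)
  have hbeta : Complex.betaIntegral (p : ℂ) (q : ℂ)
      = ((∫ u in (0:ℝ)..1, u ^ (p - 1) * (1 - u) ^ (q - 1) : ℝ) : ℂ) := by
    rw [Complex.betaIntegral, ← intervalIntegral.integral_ofReal]
    apply intervalIntegral.integral_congr
    intro x hx
    rw [Set.uIcc_of_le (by norm_num : (0:ℝ) ≤ 1)] at hx
    obtain ⟨h0, h1⟩ := hx
    dsimp only
    rw [show ((p:ℂ) - 1) = ((p - 1 : ℝ) : ℂ) by push_cast; ring,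
      show ((q:ℂ) - 1) = ((q - 1 : ℝ) : ℂ) by push_cast; ring,
      show (1 - (x:ℂ)) = ((1 - x : ℝ) : ℂ) by push_cast; ring,
      ← Complex.ofReal_cpow h0, ← Complex.ofReal_cpow (by linarith), ← Complex.ofReal_mul]
  rw [hbeta, show ((p:ℂ) + q) = ((p + q : ℝ) : ℂ) by push_cast; ring,
    Complex.Gamma_ofReal, Complex.Gamma_ofReal, Complex.Gamma_ofReal,
    ← Complex.ofReal_mul, ← Complex.ofReal_mul, Complex.ofReal_inj] at key
  have hΓ : Real.Gamma (p + q) ≠ 0 := (Real.Gamma_pos_of_pos (by linarith)).ne'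
  field_simp
  linarith [key]

lemma my_laplace (a b β : ℝ) (ha : 0 < a) (hβ : β < 1) :
    Tendsto (fun n : ℕ => (n:ℝ) ^ a *
        ∫ u in (0:ℝ)..1, Real.exp (β * n * u) * u ^ (a - 1) * (1 - u) ^ (b + n - a - 1))
      atTop (𝓝 (Real.Gamma a * (1 - β) ^ (-a))) := by
  set δ : ℝ := (1 - β) / 2 with hδdef
  have hδ : 0 < δ := by rw [hδdef]; linarith
  set F : ℕ → ℝ → ℝ := fun n t => Set.indicator (Ioo 0 (n:ℝ))
    (fun t => Real.exp (β * t) * t ^ (a - 1) * (1 - t / n) ^ (b + n - a - 1)) t with hF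
  set f : ℝ → ℝ := fun t => Real.exp (β * t) * t ^ (a - 1) * Real.exp (-t) with hf
  set bound : ℝ → ℝ := fun t => t ^ (a - 1) * Real.exp (-(δ * t)) with hbound
  -- measurability
  have hF_meas : ∀ n : ℕ, AEStronglyMeasurable (F n) (volume.restrict (Ioi 0)) := by
    intro n
    rw [hF]
    apply Measurable.aestronglyMeasurable
    apply Measurable.indicator ?_ measurableSet_Ioo
    exact (((measurable_id'.const_mul β).exp.mul (measurable_id'.pow_const _)).mul
      ((measurable_const.sub (measurable_id'.div_const _)).pow_const _))
  -- eventual bound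
  have h_bound : ∀ᶠ n : ℕ in atTop,
      ∀ᵐ t ∂(volume.restrict (Ioi (0:ℝ))), ‖F n t‖ ≤ bound t := by
    have hc0 : Tendsto (fun n : ℕ => b + (n:ℝ) - a - 1) atTop atTop := by
      simp only [sub_eq_add_neg]
      apply tendsto_atTop_add_const_right
      apply tendsto_atTop_add_const_right
      exact tendsto_atTop_add_const_left _ _ tendsto_natCast_atTop_atTop
    have hc1 : Tendsto (fun n : ℕ => δ * (n:ℝ) + (b - a - 1)) atTop atTop := by
      apply tendsto_atTop_add_const_right
      exact Tendsto.const_mul_atTop hδ tendsto_natCast_atTop_atTop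
    filter_upwards [eventually_ge_atTop 1, hc0.eventually_ge_atTop 0, hc1.eventually_ge_atTop 0]
      with n hn1 hn2 hn3
    have hn0 : (0:ℝ) < n := by exact_mod_cast hn1
    filter_upwards [self_mem_ae_restrict measurableSet_Ioi] with t ht
    have ht0 : (0:ℝ) < t := ht
    by_cases htn : t ∈ Ioo (0:ℝ) (n:ℝ)
    · rw [hF]
      simp only [Set.indicator_of_mem htn]
      have h1n : 0 < 1 - t / n := by
        rw [sub_pos]
        exact (div_lt_one hn0).mpr htn.2
      have hcn : (β + δ) * n ≤ b + n - a - 1 := by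
        have hbd : β + δ = 1 - δ := by rw [hδdef]; ring
        rw [hbd]
        nlinarith [hn3]
      have hlog : Real.log (1 - t / n) ≤ -(t / n) := by
        have := Real.log_le_sub_one_of_pos h1n
        linarith
      have hrpow : (1 - t / (n:ℝ)) ^ (b + n - a - 1) ≤ Real.exp (-((β + δ) * t)) := by
        rw [Real.rpow_def_of_pos h1n]
        apply Real.exp_le_exp.mpr
        have s1 : (b + n - a - 1) * Real.log (1 - t/n) ≤ (b + n - a - 1) * (-(t/n)) :=
          mul_le_mul_of_nonneg_left hlog hn2
        have s2 : (β + δ) * t ≤ (b + n - a - 1) * (t / n) := by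
          rw [mul_div_assoc', le_div_iff₀ hn0]
          nlinarith [mul_le_mul_of_nonneg_right hcn ht0.le]
        have s3 : (b + n - a - 1) * (-(t/n)) = -((b + n - a - 1) * (t/n)) := by ring
        linarith [s1, s2]
      rw [Real.norm_eq_abs, abs_of_nonneg (by positivity)]
      calc Real.exp (β*t) * t^(a-1) * (1-t/(n:ℝ))^(b+↑n-a-1)
          ≤ Real.exp (β*t) * t^(a-1) * Real.exp (-((β+δ)*t)) := by
            apply mul_le_mul_of_nonneg_left hrpow (by positivity)
        _ = bound t := by
            rw [hbound, mul_comm (Real.exp (β*t)) (t^(a-1)), mul_assoc, ← Real.exp_add]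
            congr 1
            ring
    · rw [hF]
      simp only [Set.indicator_of_notMem htn]
      rw [norm_zero, hbound]
      positivity
  -- bound integrable
  have h_int : Integrable bound (volume.restrict (Ioi (0:ℝ))) := my_integrable_bound ha hδ
  -- pointwise limit
  have h_lim : ∀ᵐ t ∂(volume.restrict (Ioi (0:ℝ))),
      Tendsto (fun n : ℕ => F n t) atTop (𝓝 (f t)) := by
    filter_upwards [self_mem_ae_restrict measurableSet_Ioi] with t ht
    have ht0 : (0:ℝ) < t := ht
    have hev : ∀ᶠ n : ℕ in atTop, t < (n:ℝ) :=
      tendsto_natCast_atTop_atTop.eventually_gt_atTop t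
    have hlog0 : Tendsto (fun n : ℕ => Real.log (1 - t / n)) atTop (𝓝 0) := by
      have h1 : Tendsto (fun n : ℕ => 1 - t / (n:ℝ)) atTop (𝓝 1) := by
        have h2 := Filter.Tendsto.div_atTop (tendsto_const_nhds (x := t))
          (tendsto_natCast_atTop_atTop (R := ℝ))
        simpa using tendsto_const_nhds.sub h2
      have := (Real.continuousAt_log one_ne_zero).tendsto.comp h1
      simpa [Function.comp_def] using this
    have hmul : Tendsto (fun n : ℕ => (n:ℝ) * Real.log (1 - t / n)) atTop (𝓝 (-t)) := by
      have h3 := (tendsto_mul_log_one_add_div_atTop (-t)).comp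
        (tendsto_natCast_atTop_atTop (R := ℝ))
      simp only [Function.comp_def] at h3
      apply h3.congr
      intro n
      rw [neg_div, ← sub_eq_add_neg]
    have hexp : Tendsto (fun n : ℕ => (b + n - a - 1) * Real.log (1 - t / n)) atTop (𝓝 (-t)) := by
      have h2 : Tendsto (fun n : ℕ => (b - a - 1) * Real.log (1 - t/n) + (n:ℝ) * Real.log (1 - t/n))
          atTop (𝓝 ((b - a - 1) * 0 + -t)) := (hlog0.const_mul _).add hmul
      rw [mul_zero, zero_add] at h2
      apply h2.congr
      intro n; ring
    have hpow : Tendsto (fun n : ℕ => (1 - t/(n:ℝ)) ^ (b + n - a - 1)) atTop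
        (𝓝 (Real.exp (-t))) := by
      have hcont := (Real.continuous_exp.tendsto (-t)).comp hexp
      apply hcont.congr'
      filter_upwards [hev] with n hn
      simp only [Function.comp_def]
      have hn0 : (0:ℝ) < n := lt_trans ht0 hn
      rw [Real.rpow_def_of_pos (by rw [sub_pos]; exact (div_lt_one hn0).mpr hn)]
      ring_nf
    have hmain : Tendsto (fun n : ℕ =>
        Real.exp (β*t) * t^(a-1) * (1 - t/(n:ℝ)) ^ (b + ↑n - a - 1)) atTop (𝓝 (f t)) := by
      rw [hf]
      exact tendsto_const_nhds.mul hpow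
    apply hmain.congr'
    filter_upwards [hev] with n hn
    simp only [hF]
    have hmem : t ∈ Ioo (0:ℝ) (n:ℝ) := Set.mem_Ioo.mpr ⟨ht0, hn⟩
    rw [Set.indicator_of_mem hmem]
  have hDCT := tendsto_integral_filter_of_dominated_convergence bound
    (Filter.Eventually.of_forall hF_meas) h_bound h_int h_lim
  -- value of limit integral
  have hval : ∫ t in Ioi (0:ℝ), f t = Real.Gamma a * (1 - β) ^ (-a) := by
    have h1 : ∀ t ∈ Ioi (0:ℝ), f t = t ^ (a-1) * Real.exp (-((1-β) * t)) := by
      intro t ht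
      rw [hf]
      dsimp only
      rw [mul_comm (Real.exp (β*t)) (t^(a-1)), mul_assoc, ← Real.exp_add]
      congr 1
      ring
    rw [setIntegral_congr_fun measurableSet_Ioi h1,
      Real.integral_rpow_mul_exp_neg_mul_Ioi ha (by linarith : (0:ℝ) < 1 - β),
      one_div, Real.inv_rpow (by linarith : (0:ℝ) ≤ 1 - β), ← Real.rpow_neg (by linarith)]
    ring
  rw [hval] at hDCT
  apply hDCT.congr'
  -- eventual identity
  filter_upwards [eventually_ge_atTop 1] with n hn
  have hn0 : (0:ℝ) < n := by exact_mod_cast hn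
  have hne : (n:ℝ) ≠ 0 := hn0.ne'
  have h1 : (∫ t in (0:ℝ)..(n:ℝ),
        (fun u => Real.exp (β*↑n*u) * u^(a-1) * (1-u)^(b+↑n-a-1)) (t / n))
      = (n:ℝ) • ∫ u in (0:ℝ)..1, Real.exp (β*↑n*u) * u^(a-1) * (1-u)^(b+↑n-a-1) := by
    have := intervalIntegral.integral_comp_div
      (f := fun u => Real.exp (β*↑n*u) * u^(a-1) * (1-u)^(b+↑n-a-1))
      (a := 0) (b := (n:ℝ)) (c := (n:ℝ)) hne
    rw [zero_div, div_self hne] at this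
    exact this
  have h2 : ∫ t in Ioi (0:ℝ), F n t = ∫ t in Ioo (0:ℝ) (n:ℝ),
      Real.exp (β*t) * t^(a-1) * (1 - t/n)^(b+↑n-a-1) := by
    rw [hF]
    rw [setIntegral_indicator measurableSet_Ioo,
      Set.inter_eq_self_of_subset_right Set.Ioo_subset_Ioi_self]
  have h3 : (∫ t in Ioo (0:ℝ) (n:ℝ), Real.exp (β*t) * t^(a-1) * (1-t/n)^(b+↑n-a-1))
      = ∫ t in Ioo (0:ℝ) (n:ℝ), (n:ℝ)^(a-1) *
        ((fun u => Real.exp (β*↑n*u) * u^(a-1) * (1-u)^(b+↑n-a-1)) (t / n)) := by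
    apply setIntegral_congr_fun measurableSet_Ioo
    intro t htn
    dsimp only
    have e1 : β*↑n*(t/↑n) = β*t := by field_simp
    rw [e1, Real.div_rpow htn.1.le hn0.le]
    have hpne : ((n:ℝ))^(a-1) ≠ 0 := (Real.rpow_pos_of_pos hn0 _).ne'
    field_simp
  rw [h2, h3, MeasureTheory.integral_const_mul, ← integral_Ioc_eq_integral_Ioo,
    ← intervalIntegral.integral_of_le hn0.le, h1, smul_eq_mul, ← mul_assoc]
  congr 1
  have hr : (n:ℝ) ^ a = (n:ℝ) ^ (a - 1) * (n:ℝ) ^ (1:ℝ) := by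
    rw [← Real.rpow_add hn0]; norm_num
  rw [hr, Real.rpow_one]

/-- Asymptotics of the confluent hypergeometric function with argument growing
proportionally to the second parameter, subcritical case: for fixed `a > 0`, `b`,
`β̃ < 1`, with
`₁F₁(a;b+n;β̃n) := (Γ(b+n)/(Γ(a)Γ(b+n-a))) ∫₀¹ e^{β̃ n u} u^{a-1}(1-u)^{b+n-a-1} du`,
one has `lim_{n→∞} ₁F₁(a;b+n;β̃n) = (1-β̃)^{-a}`. -/
theorem hyp1F1_limit_subcritical (a b βt : ℝ) (ha : 0 < a) (hβ : βt < 1) :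
    Filter.Tendsto (fun n : ℕ =>
        (Real.Gamma (b + n) / (Real.Gamma a * Real.Gamma (b + n - a))) *
          ∫ u in (0:ℝ)..1, Real.exp (βt * n * u) * u ^ (a - 1) * (1 - u) ^ (b + n - a - 1))
      Filter.atTop (𝓝 ((1 - βt) ^ (-a))) := by
  have hL1 := my_laplace a b βt ha hβ
  have hL0 := my_laplace a b 0 ha (by norm_num)
  rw [show Real.Gamma a * (1 - (0:ℝ)) ^ (-a) = Real.Gamma a by
    rw [sub_zero, Real.one_rpow, mul_one]] at hL0
  have hΓa : (0:ℝ) < Real.Gamma a := Real.Gamma_pos_of_pos ha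
  have hdiv := hL1.div hL0 hΓa.ne'
  rw [show Real.Gamma a * (1 - βt) ^ (-a) / Real.Gamma a = (1 - βt) ^ (-a) by
    rw [mul_comm, mul_div_assoc, div_self hΓa.ne', mul_one]] at hdiv
  apply hdiv.congr'
  have hq : Tendsto (fun n : ℕ => b + (n:ℝ) - a) atTop atTop := by
    simp only [sub_eq_add_neg]
    apply tendsto_atTop_add_const_right
    exact tendsto_atTop_add_const_left _ _ tendsto_natCast_atTop_atTop
  filter_upwards [eventually_ge_atTop 1, hq.eventually_gt_atTop 0] with n hn hbna
  have hn0 : (0:ℝ) < n := by exact_mod_cast hn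
  have hna : ((n:ℝ)) ^ a ≠ 0 := (Real.rpow_pos_of_pos hn0 _).ne'
  have hK : (∫ u in (0:ℝ)..1, Real.exp (0 * n * u) * u ^ (a - 1) * (1 - u) ^ (b + n - a - 1))
      = Real.Gamma a * Real.Gamma (b + n - a) / Real.Gamma (b + n) := by
    have hb := my_real_beta ha hbna
    rw [show a + (b + (n:ℝ) - a) = b + n by ring] at hb
    rw [← hb]
    apply intervalIntegral.integral_congr
    intro u _
    simp only [zero_mul, Real.exp_zero, one_mul]
  simp only [Pi.div_apply]
  rw [mul_div_mul_left _ _ hna, hK]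
  rw [div_div_eq_mul_div, div_mul_eq_mul_div, mul_comm]
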